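/- arXiv:2602.23196 — 3 statements merged into one kernel-verified Lean document; each statement's English description precedes it below -/
import Mathlib

section
/- There exists a finite simple graph that is triangle-free and admits a proper 3-coloring, containing three pairwise distinct, pairwise non-adjacent vertices u, v, w such that every proper 3-coloring c of the graph assigns u, v, w three pairwise distinct colors, i.e., c(u), c(v), c(w) are all different. -/
/-- Edge list of the 24-vertex graph: three copies of a 9-vertex triangle-free
"inequality gadget" glued at the special vertices 0, 1, 2. -/
def coreEdges : List (Fin 24 × Fin 24) :=
  [(0,4),(0,7),(0,8),(1,3),(1,5),(3,4),(3,7),(3,9),(4,5),(5,6),(5,8),(6,9),(6,7),(8,9),(1,11),(1,14),(1,15),(2,10),(2,12),(10,11),(10,14),(10,16),(11,12),(12,13),(12,15),(13,16),(13,14),(15,16),(0,18),(0,21),(0,22),(2,17),(2,19),(17,18),(17,21),(17,23),(18,19),(19,20),(19,22),(20,23),(20,21),(22,23)]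

lemma core_loopless : ∀ a : Fin 24, ¬((a,a) ∈ coreEdges ∨ (a,a) ∈ coreEdges) := by decide

def coreGraph : SimpleGraph (Fin 24) where
  Adj a b := (a,b) ∈ coreEdges ∨ (b,a) ∈ coreEdges
  symm := ⟨fun _ _ h => h.symm⟩
  loopless := ⟨fun a => core_loopless a⟩

instance : DecidableRel coreGraph.Adj :=
  fun _ _ => inferInstanceAs (Decidable (_ ∨ _))

set_option synthInstance.maxSize 2000 in
set_option synthInstance.maxHeartbeats 1000000 in
set_option maxRecDepth 4000 in
lemma gadget_key : ∀ a0 a1 a2 a3 a4 a5 a6 a7 a8 : Fin 3,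
    a0≠a3 → a0≠a6 → a0≠a7 → a1≠a2 → a1≠a4 → a2≠a3 → a2≠a6 → a2≠a8 →
    a3≠a4 → a4≠a5 → a4≠a7 → a5≠a8 → a5≠a6 → a7≠a8 → a0 ≠ a1 := by decide

lemma core_triangle_free : ∀ a b c : Fin 24,
    coreGraph.Adj a b → coreGraph.Adj a c → coreGraph.Adj b c → False := by decide

def coreCol : Fin 24 → Fin 3 :=
  ![0,1,2,0,1,0,1,2,1,2,0,2,1,0,2,0,1,0,1,0,1,2,1,2]

lemma coreCol_valid : ∀ a b : Fin 24, coreGraph.Adj a b → coreCol a ≠ coreCol b := by decide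

/-- **The core of the gadget `X`.** There exists a finite simple graph that is
triangle-free and admits a proper 3-coloring, containing three pairwise distinct,
pairwise non-adjacent vertices `u, v, w` such that every proper 3-coloring assigns
them three pairwise distinct colors. -/
theorem core_gadget_exists :
    ∃ (W : Type) (_ : Fintype W) (G : SimpleGraph W) (u v w : W),
      G.CliqueFree 3 ∧ G.Colorable 3 ∧
      u ≠ v ∧ v ≠ w ∧ u ≠ w ∧
      ¬ G.Adj u v ∧ ¬ G.Adj v w ∧ ¬ G.Adj u w ∧
      ∀ c : G.Coloring (Fin 3), c u ≠ c v ∧ c v ≠ c w ∧ c u ≠ c w := by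
  refine ⟨Fin 24, inferInstance, coreGraph, 0, 1, 2, ?_, ?_, ?_, ?_, ?_, ?_, ?_, ?_, ?_⟩
  · intro s hs
    rw [SimpleGraph.is3Clique_iff] at hs
    obtain ⟨a, b, c, hab, hac, hbc, -⟩ := hs
    exact core_triangle_free a b c hab hac hbc
  · exact ⟨SimpleGraph.Coloring.mk coreCol (fun {a b} h => coreCol_valid a b h)⟩
  · decide
  · decide
  · decide
  · decide
  · decide
  · decide
  · intro c
    have hv : ∀ a b : Fin 24, (a,b) ∈ coreEdges → c a ≠ c b :=
      fun a b h => c.valid (Or.inl h)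
    have h1 := gadget_key (c 0) (c 1) (c 3) (c 4) (c 5) (c 6) (c 7) (c 8) (c 9) (hv 0 4 (by decide)) (hv 0 7 (by decide)) (hv 0 8 (by decide)) (hv 1 3 (by decide)) (hv 1 5 (by decide)) (hv 3 4 (by decide)) (hv 3 7 (by decide)) (hv 3 9 (by decide)) (hv 4 5 (by decide)) (hv 5 6 (by decide)) (hv 5 8 (by decide)) (hv 6 9 (by decide)) (hv 6 7 (by decide)) (hv 8 9 (by decide))
    have h2 := gadget_key (c 1) (c 2) (c 10) (c 11) (c 12) (c 13) (c 14) (c 15) (c 16) (hv 1 11 (by decide)) (hv 1 14 (by decide)) (hv 1 15 (by decide)) (hv 2 10 (by decide)) (hv 2 12 (by decide)) (hv 10 11 (by decide)) (hv 10 14 (by decide)) (hv 10 16 (by decide)) (hv 11 12 (by decide)) (hv 12 13 (by decide)) (hv 12 15 (by decide)) (hv 13 16 (by decide)) (hv 13 14 (by decide)) (hv 15 16 (by decide))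
    have h3 := gadget_key (c 0) (c 2) (c 17) (c 18) (c 19) (c 20) (c 21) (c 22) (c 23) (hv 0 18 (by decide)) (hv 0 21 (by decide)) (hv 0 22 (by decide)) (hv 2 17 (by decide)) (hv 2 19 (by decide)) (hv 17 18 (by decide)) (hv 17 21 (by decide)) (hv 17 23 (by decide)) (hv 18 19 (by decide)) (hv 19 20 (by decide)) (hv 19 22 (by decide)) (hv 20 23 (by decide)) (hv 20 21 (by decide)) (hv 22 23 (by decide))
    exact ⟨h1, h2, h3⟩
end

section
/- For every positive integer k, there exists a finite simple graph that is triangle-free and admits a proper 3-coloring, containing k+1 pairwise distinct vertices u, s₁, …, s_k such that the set {u, s₁, …, s_k} is an independent set and every proper 3-coloring c of the graph satisfies c(u) = c(s₁) = ⋯ = c(s_k). -/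
/- Base gadget: Grötzsch graph minus the edge {0,1}. Vertex 0 is the hub `u`;
vertices 1..10 are "interior", re-indexed as `Fin 10` (interior index = base label - 1). -/

/-- Interior edges (0-indexed). -/
def LB : List (ℕ × ℕ) :=
  [(0,1),(0,4),(0,6),(1,2),(1,5),(1,7),(2,3),(2,6),(2,8),(3,4),(3,7),
   (4,9),(5,9),(6,9),(7,9),(8,9)]

def B (a b : Fin 10) : Bool := decide ((a.1, b.1) ∈ LB) || decide ((b.1, a.1) ∈ LB)

/-- Interior neighbors of the hub. -/
def N0 (a : Fin 10) : Bool := decide (a.1 ∈ [3, 5, 8])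

lemma Bsymm : ∀ x y : Fin 10, B x y = B y x := by decide

lemma Birr : ∀ x : Fin 10, B x x = false := by decide

lemma tri0 : ∀ y z : Fin 10, N0 y = true → N0 z = true → B y z = true → False := by decide

lemma tri1 : ∀ x y z : Fin 10, B x y = true → B x z = true → B y z = true → False := by decide

def ok (c0 c1 c2 c3 c4 c5 c6 c7 c8 c9 c10 : Fin 3) : Bool :=
  !(c0≠c4 && c0≠c6 && c0≠c9 && c1≠c2 && c1≠c5 && c1≠c7 && c2≠c3 && c2≠c6 && c2≠c8 &&
    c3≠c4 && c3≠c7 && c3≠c9 && c4≠c5 && c4≠c8 && c5≠c10 && c6≠c10 && c7≠c10 && c8≠c10 &&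
    c9≠c10) || c1 == c0

set_option maxHeartbeats 4000000 in
set_option maxRecDepth 20000 in
theorem forcing2 : ∀ c1 c2 c3 c4 c5 c6 c7 c8 c9 c10 : Fin 3,
    ok 0 c1 c2 c3 c4 c5 c6 c7 c8 c9 c10 = true := by decide

theorem forcing3 (c1 c2 c3 c4 c5 c6 c7 c8 c9 c10 : Fin 3)
    (h1 : (0:Fin 3) ≠ c4) (h2 : (0:Fin 3) ≠ c6) (h3 : (0:Fin 3) ≠ c9)
    (h4 : c1 ≠ c2) (h5 : c1 ≠ c5) (h6 : c1 ≠ c7) (h7 : c2 ≠ c3) (h8 : c2 ≠ c6)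
    (h9 : c2 ≠ c8) (h10 : c3 ≠ c4) (h11 : c3 ≠ c7) (h12 : c3 ≠ c9) (h13 : c4 ≠ c5)
    (h14 : c4 ≠ c8) (h15 : c5 ≠ c10) (h16 : c6 ≠ c10) (h17 : c7 ≠ c10)
    (h18 : c8 ≠ c10) (h19 : c9 ≠ c10) : c1 = 0 := by
  have h := forcing2 c1 c2 c3 c4 c5 c6 c7 c8 c9 c10
  simp only [ok, h1, h2, h3, h4, h5, h6, h7, h8, h9, h10, h11, h12, h13, h14, h15, h16,
    h17, h18, h19, Bool.or_eq_true, beq_iff_eq, decide_eq_true_eq, Bool.and_true,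
    Bool.true_and, decide_not, Bool.not_eq_true', decide_eq_false_iff_not, not_not,
    Bool.not_eq_true, ne_eq, not_false_eq_true, Bool.and_self] at h
  simpa using h

/-- The glued graph: `k` copies of the gadget interior, sharing the hub `none`. -/
def Gk (k : ℕ) : SimpleGraph (Option (Fin k × Fin 10)) where
  Adj a b :=
    match a, b with
    | none, none => False
    | none, some (_, x) => N0 x = true
    | some (_, x), none => N0 x = true
    | some (i, x), some (j, y) => i = j ∧ B x y = true
  symm := by
    constructor
    rintro (_ | ⟨i, x⟩) (_ | ⟨j, y⟩) h
    · exact h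
    · exact h
    · exact h
    · exact ⟨h.1.symm, (Bsymm x y) ▸ h.2⟩
  loopless := by
    constructor
    rintro (_ | ⟨i, x⟩) h
    · exact h
    · exact absurd h.2 (by simp [Birr x])

lemma Gk_adj0 {k : ℕ} (i : Fin k) (x : Fin 10) (h : N0 x = true) :
    (Gk k).Adj none (some (i, x)) := h

lemma Gk_adjB {k : ℕ} (i : Fin k) (x y : Fin 10) (h : B x y = true) :
    (Gk k).Adj (some (i, x)) (some (i, y)) := ⟨rfl, h⟩

/-- Coloring of the interior (example proper coloring restricted). -/
def gcol : Fin 10 → Fin 3 := ![0,1,0,1,2,2,1,2,1,0]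

lemma gcol0 : ∀ x : Fin 10, N0 x = true → gcol x ≠ 0 := by decide

lemma gcolB : ∀ x y : Fin 10, B x y = true → gcol x ≠ gcol y := by decide

/-- **Generalized equality gadget `EQ_{u,S}`.** For every positive integer `k`, there
exists a finite simple graph that is triangle-free and admits a proper 3-coloring,
containing `k+1` pairwise distinct vertices `u, s 0, …, s (k-1)` forming an independent
set, such that every proper 3-coloring `c` satisfies `c (s i) = c u` for all `i`. -/
theorem generalized_equality_gadget_exists (k : ℕ) (hk : 0 < k) :
    ∃ (W : Type) (_ : Fintype W) (G : SimpleGraph W) (u : W) (s : Fin k → W),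
      G.CliqueFree 3 ∧ G.Colorable 3 ∧
      Function.Injective s ∧ (∀ i, s i ≠ u) ∧
      (∀ a ∈ insert u (Set.range s), ∀ b ∈ insert u (Set.range s), ¬ G.Adj a b) ∧
      ∀ c : G.Coloring (Fin 3), ∀ i, c (s i) = c u := by
  refine ⟨Option (Fin k × Fin 10), inferInstance, Gk k, none, fun i => some (i, 0),
    ?_, ?_, ?_, ?_, ?_, ?_⟩
  · -- triangle-free
    intro t ht
    rw [SimpleGraph.is3Clique_iff] at ht
    obtain ⟨a, b, c, hab, hac, hbc, -⟩ := ht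
    rcases a with _ | ⟨i, x⟩ <;> rcases b with _ | ⟨j, y⟩ <;> rcases c with _ | ⟨l, z⟩
    · exact hab
    · exact hab
    · exact hac
    · obtain ⟨rfl, hyz⟩ := hbc
      exact tri0 y z hab hac hyz
    · exact hbc
    · obtain ⟨rfl, hxz⟩ := hac
      exact tri0 x z hab hbc hxz
    · obtain ⟨rfl, hxy⟩ := hab
      exact tri0 x y hac hbc hxy
    · obtain ⟨rfl, hxy⟩ := hab
      obtain ⟨rfl, hxz⟩ := hac
      obtain ⟨-, hyz⟩ := hbc
      exact tri1 x y z hxy hxz hyz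
  · -- 3-colorable
    refine ⟨SimpleGraph.Coloring.mk
      (fun w => match w with | none => 0 | some (_, x) => gcol x) ?_⟩
    rintro (_ | ⟨i, x⟩) (_ | ⟨j, y⟩) h
    · exact absurd h (by exact id)
    · exact fun he => gcol0 y h he.symm
    · exact fun he => gcol0 x h he
    · exact gcolB x y h.2
  · -- injective
    intro i j h
    simpa using h
  · -- s i ≠ u
    intro i h
    simp at h
  · -- independent set
    rintro a (rfl | ⟨i, rfl⟩) b (rfl | ⟨j, rfl⟩)
    · exact fun h => h
    · intro h
      have h' : N0 0 = true := h
      exact absurd h' (by decide)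
    · intro h
      have h' : N0 0 = true := h
      exact absurd h' (by decide)
    · rintro ⟨-, h⟩
      simp [Birr 0] at h
  · -- forcing
    intro c i
    set a : Fin 3 := c none with ha
    set e := Equiv.swap a 0 with he
    set d : Option (Fin k × Fin 10) → Fin 3 := fun v => e (c v) with hdd
    have hd : ∀ v w, (Gk k).Adj v w → d v ≠ d w :=
      fun v w h hEq => c.valid h (e.injective hEq)
    have hd0 : d none = 0 := Equiv.swap_apply_left a 0
    have key : d (some (i, 0)) = 0 := by
      refine forcing3 (d (some (i, 0))) (d (some (i, 1))) (d (some (i, 2)))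
        (d (some (i, 3))) (d (some (i, 4))) (d (some (i, 5))) (d (some (i, 6)))
        (d (some (i, 7))) (d (some (i, 8))) (d (some (i, 9)))
        (hd0 ▸ hd none (some (i, 3)) (Gk_adj0 i 3 rfl))
        (hd0 ▸ hd none (some (i, 5)) (Gk_adj0 i 5 rfl))
        (hd0 ▸ hd none (some (i, 8)) (Gk_adj0 i 8 rfl))
        (hd _ _ (Gk_adjB i 0 1 rfl)) (hd _ _ (Gk_adjB i 0 4 rfl))
        (hd _ _ (Gk_adjB i 0 6 rfl)) (hd _ _ (Gk_adjB i 1 2 rfl))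
        (hd _ _ (Gk_adjB i 1 5 rfl)) (hd _ _ (Gk_adjB i 1 7 rfl))
        (hd _ _ (Gk_adjB i 2 3 rfl)) (hd _ _ (Gk_adjB i 2 6 rfl))
        (hd _ _ (Gk_adjB i 2 8 rfl)) (hd _ _ (Gk_adjB i 3 4 rfl))
        (hd _ _ (Gk_adjB i 3 7 rfl)) (hd _ _ (Gk_adjB i 4 9 rfl))
        (hd _ _ (Gk_adjB i 5 9 rfl)) (hd _ _ (Gk_adjB i 6 9 rfl))
        (hd _ _ (Gk_adjB i 7 9 rfl)) (hd _ _ (Gk_adjB i 8 9 rfl))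
    have : e (c (some (i, 0))) = e (c none) := by
      rw [show e (c (some (i, 0))) = d (some (i, 0)) from rfl, key,
        show e (c none) = d none from rfl, hd0]
    exact e.injective this
end

section
/- Let H and G be finite simple graphs and suppose G contains no induced copy of H. If G contains a copy of the augmented pattern H⁺ (an injective graph homomorphism from H⁺ to G), then G contains at least two distinct triangles, i.e., at least two distinct 3-cliques. -/
open SimpleGraph

/-- Vertex type of the augmented pattern `H⁺`: the vertices of `H` together with two new
vertices `(s, false)` and `(s, true)` for every non-edge `s = {u,v}` of `H`. -/
abbrev AugVert {V : Type*} (H : SimpleGraph V) : Type _ :=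
  V ⊕ ({s : Sym2 V // ¬ s.IsDiag ∧ s ∉ H.edgeSet} × Bool)

/-- The augmented pattern `H⁺`: all edges of `H`, together with, for each non-edge
`{u,v}` of `H`, the four edges joining `u` and `v` to the two new vertices
`(⟨{u,v},_⟩, false)` and `(⟨{u,v},_⟩, true)`. -/
def augment {V : Type*} (H : SimpleGraph V) : SimpleGraph (AugVert H) :=
  SimpleGraph.fromRel (fun x y =>
    match x, y with
    | Sum.inl a, Sum.inl b => H.Adj a b
    | Sum.inl a, Sum.inr p => a ∈ p.1.1
    | _, _ => False)

lemma augment_adj_inl_inr {V : Type*} (H : SimpleGraph V)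
    (a : V) (p : {s : Sym2 V // ¬ s.IsDiag ∧ s ∉ H.edgeSet} × Bool)
    (ha : a ∈ p.1.1) : (augment H).Adj (Sum.inl a) (Sum.inr p) := by
  refine ⟨by simp, Or.inl ?_⟩
  exact ha

/-- If `G` contains no induced copy of `H` but contains a copy of the augmented pattern
`H⁺`, then `G` contains at least two distinct triangles. -/
theorem augment_copy_gives_two_triangles {V U : Type*} [Fintype V] [Fintype U]
    (H : SimpleGraph V) (G : SimpleGraph U)
    (hfree : ¬ ∃ φ : V → U, Function.Injective φ ∧
      ∀ a b : V, H.Adj a b ↔ G.Adj (φ a) (φ b))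
    (hcopy : ∃ ψ : augment H →g G, Function.Injective ψ) :
    ∃ T₁ T₂ : Finset U, G.IsNClique 3 T₁ ∧ G.IsNClique 3 T₂ ∧ T₁ ≠ T₂ := by
  classical
  obtain ⟨ψ, hψ⟩ := hcopy
  set φ : V → U := fun a => ψ (Sum.inl a) with hφ
  have hφinj : Function.Injective φ := fun a b h => by
    have := hψ h; simpa using this
  have hforward : ∀ a b : V, H.Adj a b → G.Adj (φ a) (φ b) := by
    intro a b hab
    exact ψ.map_adj ⟨by simp [hab.ne], Or.inl hab⟩
  -- there must be a non-edge of H mapped to an edge of G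
  have : ∃ a b : V, ¬ H.Adj a b ∧ G.Adj (φ a) (φ b) := by
    by_contra hcon
    push_neg at hcon
    exact hfree ⟨φ, hφinj, fun a b =>
      ⟨hforward a b, fun h => by_contra fun hn => (hcon a b hn h)⟩⟩
  obtain ⟨a, b, hnadj, hG⟩ := this
  have hab : a ≠ b := fun h => by subst h; exact G.irrefl hG
  have hs : ¬ (s(a, b) : Sym2 V).IsDiag ∧ s(a, b) ∉ H.edgeSet := by
    constructor
    · simpa using hab
    · simpa using hnadj
  set p₁ : {s : Sym2 V // ¬ s.IsDiag ∧ s ∉ H.edgeSet} × Bool := (⟨s(a,b), hs⟩, false)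
  set p₂ : {s : Sym2 V // ¬ s.IsDiag ∧ s ∉ H.edgeSet} × Bool := (⟨s(a,b), hs⟩, true)
  have hxa : G.Adj (φ a) (ψ (Sum.inr p₁)) :=
    ψ.map_adj (augment_adj_inl_inr H a p₁ (by simp [p₁]))
  have hxb : G.Adj (φ b) (ψ (Sum.inr p₁)) :=
    ψ.map_adj (augment_adj_inl_inr H b p₁ (by simp [p₁]))
  have hya : G.Adj (φ a) (ψ (Sum.inr p₂)) :=
    ψ.map_adj (augment_adj_inl_inr H a p₂ (by simp [p₂]))
  have hyb : G.Adj (φ b) (ψ (Sum.inr p₂)) :=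
    ψ.map_adj (augment_adj_inl_inr H b p₂ (by simp [p₂]))
  refine ⟨{φ a, φ b, ψ (Sum.inr p₁)}, {φ a, φ b, ψ (Sum.inr p₂)}, ?_, ?_, ?_⟩
  · exact is3Clique_triple_iff.2 ⟨hG, hxa, hxb⟩
  · exact is3Clique_triple_iff.2 ⟨hG, hya, hyb⟩
  · intro h
    have hx : ψ (Sum.inr p₁) ∈ ({φ a, φ b, ψ (Sum.inr p₂)} : Finset U) := by
      rw [← h]; simp
    simp only [Finset.mem_insert, Finset.mem_singleton] at hx
    rcases hx with h1 | h1 | h1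
    · exact (by simpa using (hψ h1.symm) : False)
    · exact (by simpa using (hψ h1.symm) : False)
    · have := hψ h1
      simp [p₁, p₂] at this
end
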